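/- For every c ≥ 0, μ ∈ ℝ and t ≥ 0, the following exchange-of-integration identity holds: ∫₀ᵗ ( Σ_{n=1}^∞ (cⁿ / Γ(n/2)) · (t − s)^{n/2 − 1} ) · ( ∫₀ˢ (s − τ)^{−1/2} e^{μ τ} dτ ) ds = Γ(1/2) · ∫₀ᵗ ( Σ_{n=1}^∞ (cⁿ / Γ((n+1)/2)) · (t − τ)^{(n−1)/2} ) e^{μ τ} dτ. -/

import Mathlib

open MeasureTheory Set Real Function
open scoped ENNReal


lemma summable_base {q : ℝ} (hq : 0 ≤ q) :
    Summable fun n : ℕ => q ^ n / Real.Gamma (((n : ℝ) + 1) / 2) := by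
  have heven : Summable fun k : ℕ => q ^ (2 * k) / Real.Gamma ((((2 * k : ℕ) : ℝ) + 1) / 2) := by
    have heq : ∀ k : ℕ, q ^ (2 * k) / Real.Gamma ((((2 * k : ℕ) : ℝ) + 1) / 2)
        = (q ^ 2) ^ k / Real.Gamma ((k : ℝ) + 1 / 2) := by
      intro k
      rw [pow_mul]
      congr 2
      push_cast
      ring
    rw [funext heq, ← summable_nat_add_iff 2]
    have hsum : Summable fun k : ℕ => (q ^ 2) ^ 2 * ((q ^ 2) ^ k / (Nat.factorial k : ℝ)) :=
      (Real.summable_pow_div_factorial (q ^ 2)).mul_left _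
    refine Summable.of_nonneg_of_le (fun k => by positivity) (fun k => ?_) hsum
    have hΓ : (Nat.factorial k : ℝ) ≤ Real.Gamma (((k + 2 : ℕ) : ℝ) + 1 / 2) := by
      have h1 : Real.Gamma ((k : ℝ) + 2) = (Nat.factorial (k + 1) : ℝ) := by
        have := Real.Gamma_nat_eq_factorial (k + 1)
        push_cast at this ⊢
        rw [← this]; ring_nf
      have h2 : Real.Gamma ((k : ℝ) + 2) ≤ Real.Gamma (((k + 2 : ℕ) : ℝ) + 1 / 2) := by
        refine Real.Gamma_strictMonoOn_Ici.monotoneOn ?_ ?_ ?_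
        · simp only [mem_Ici]; linarith [Nat.cast_nonneg (α := ℝ) k]
        · simp only [mem_Ici]; push_cast; linarith [Nat.cast_nonneg (α := ℝ) k]
        · push_cast; linarith
      have h3 : (Nat.factorial k : ℝ) ≤ (Nat.factorial (k + 1) : ℝ) := by
        exact_mod_cast Nat.factorial_le (Nat.le_succ k)
      linarith
    have hΓpos : (0:ℝ) < (Nat.factorial k : ℝ) := by positivity
    calc (q ^ 2) ^ (k + 2) / Real.Gamma (((k + 2 : ℕ) : ℝ) + 1 / 2)
        ≤ (q ^ 2) ^ (k + 2) / (Nat.factorial k : ℝ) := by gcongr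
      _ = (q ^ 2) ^ 2 * ((q ^ 2) ^ k / (Nat.factorial k : ℝ)) := by ring
  have hodd : Summable fun k : ℕ => q ^ (2 * k + 1) / Real.Gamma ((((2 * k + 1 : ℕ) : ℝ) + 1) / 2) := by
    have heq : ∀ k : ℕ, q ^ (2 * k + 1) / Real.Gamma ((((2 * k + 1 : ℕ) : ℝ) + 1) / 2)
        = q * ((q ^ 2) ^ k / (Nat.factorial k : ℝ)) := by
      intro k
      have harg : (((2 * k + 1 : ℕ) : ℝ) + 1) / 2 = (k : ℝ) + 1 := by push_cast; ring
      rw [harg, Real.Gamma_nat_eq_factorial, pow_succ, pow_mul]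
      ring
    rw [funext heq]
    exact (Real.summable_pow_div_factorial (q ^ 2)).mul_left _
  obtain ⟨a, ha⟩ := heven
  obtain ⟨b, hb⟩ := hodd
  exact ⟨a + b, HasSum.even_add_odd ha hb⟩



/-- Real Beta evaluation on `0..A`. -/
lemma beta_real {a b A : ℝ} (ha : 0 < a) (hb : 0 < b) (hA : 0 < A) :
    ∫ x in (0:ℝ)..A, x ^ (a - 1) * (A - x) ^ (b - 1)
      = A ^ (a + b - 1) * (Real.Gamma a * Real.Gamma b / Real.Gamma (a + b)) := by
  -- complex version
  have hc : ∫ x in (0:ℝ)..A, ((x:ℂ)) ^ ((a:ℂ) - 1) * ((A:ℂ) - x) ^ ((b:ℂ) - 1)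
      = (A:ℂ) ^ ((a:ℂ) + b - 1) *
          (Complex.Gamma a * Complex.Gamma b / Complex.Gamma ((a:ℂ) + b)) := by
    rw [Complex.betaIntegral_scaled (a:ℂ) (b:ℂ) hA]
    congr 1
    have hG : Complex.Gamma ((a:ℂ) + b) ≠ 0 := by
      rw [(by push_cast; rfl : (a:ℂ) + b = ((a + b : ℝ) : ℂ)), Complex.Gamma_ofReal]
      exact_mod_cast (Real.Gamma_pos_of_pos (by linarith)).ne'
    rw [eq_div_iff hG, mul_comm]
    exact (Complex.Gamma_mul_Gamma_eq_betaIntegral (by simpa using ha) (by simpa using hb)).symm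
  -- the complex integrand is the coercion of the real one on [0, A]
  have hcongr : ∫ x in (0:ℝ)..A, ((x:ℂ)) ^ ((a:ℂ) - 1) * ((A:ℂ) - x) ^ ((b:ℂ) - 1)
      = ∫ x in (0:ℝ)..A, ((x ^ (a - 1) * (A - x) ^ (b - 1) : ℝ) : ℂ) := by
    refine intervalIntegral.integral_congr fun x hx => ?_
    rw [uIcc_of_le hA.le] at hx
    rw [show ((a:ℂ) - 1) = ((a - 1 : ℝ) : ℂ) by push_cast; ring,
      show ((b:ℂ) - 1) = ((b - 1 : ℝ) : ℂ) by push_cast; ring,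
      ← Complex.ofReal_sub A x,
      ← Complex.ofReal_cpow hx.1 (a - 1),
      ← Complex.ofReal_cpow (by linarith [hx.2] : (0:ℝ) ≤ A - x) (b - 1)]
    push_cast
    ring
  rw [hcongr, intervalIntegral.integral_ofReal] at hc
  have hR : ((A ^ (a + b - 1) * (Real.Gamma a * Real.Gamma b / Real.Gamma (a + b)) : ℝ) : ℂ)
      = (A:ℂ) ^ ((a:ℂ) + b - 1) *
          (Complex.Gamma a * Complex.Gamma b / Complex.Gamma ((a:ℂ) + b)) := by
    rw [show ((a:ℂ) + b - 1) = ((a + b - 1 : ℝ) : ℂ) by push_cast; ring,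
      ← Complex.ofReal_cpow hA.le (a + b - 1)]
    rw [Complex.Gamma_ofReal, Complex.Gamma_ofReal, (by push_cast; rfl : (a:ℂ) + b = ((a + b : ℝ) : ℂ)), Complex.Gamma_ofReal]
    push_cast
    ring
  exact_mod_cast hc.trans hR.symm



lemma intervalIntegrable_beta {a b A : ℝ} (ha : 0 < a) (hb : 0 < b) (hA : 0 < A) :
    IntervalIntegrable (fun x => x ^ (a - 1) * (A - x) ^ (b - 1)) volume 0 A := by
  have h1 : IntervalIntegrable (fun x => x ^ (a - 1) * (A - x) ^ (b - 1)) volume 0 (A / 2) := by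
    refine (intervalIntegral.intervalIntegrable_rpow' (by linarith)).mul_continuousOn ?_
    refine (continuousOn_const.sub continuousOn_id).rpow_const fun x hx => Or.inl ?_
    rw [uIcc_of_le (by linarith : (0:ℝ) ≤ A / 2)] at hx
    have := hx.2
    show A - x ≠ 0
    intro h
    have : A - x = 0 → False := by intro h0; linarith
    exact this h
  have h2 : IntervalIntegrable (fun x => x ^ (a - 1) * (A - x) ^ (b - 1)) volume (A / 2) A := by
    have hb' : IntervalIntegrable (fun u : ℝ => u ^ (b - 1)) volume 0 (A / 2) :=
      intervalIntegral.intervalIntegrable_rpow' (by linarith)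
    have hb'' := (hb'.comp_sub_left A).symm
    simp only [sub_zero, sub_self] at hb''
    have hb3 : IntervalIntegrable (fun x : ℝ => (A - x) ^ (b - 1)) volume (A / 2) A := by
      have : A - A / 2 = A / 2 := by ring
      rwa [this] at hb''
    refine hb3.continuousOn_mul ?_
    refine continuousOn_id.rpow_const fun x hx => Or.inl ?_
    rw [uIcc_of_le (by linarith : A / 2 ≤ A)] at hx
    have := hx.1
    simp only [id]
    intro h; rw [h] at this; linarith
  exact h1.trans h2

lemma intervalIntegrable_kernel (μ s : ℝ) :
    IntervalIntegrable (fun τ => (s - τ) ^ (-(1:ℝ)/2) * Real.exp (μ * τ)) volume 0 s := by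
  have h1 : IntervalIntegrable (fun u : ℝ => u ^ (-(1:ℝ)/2)) volume 0 s :=
    intervalIntegral.intervalIntegrable_rpow' (by norm_num)
  have h2 := h1.comp_sub_left s
  simp only [sub_zero, sub_self] at h2
  exact h2.symm.mul_continuousOn (Continuous.continuousOn (by continuity))


lemma summable_f {c : ℝ} (hc : 0 ≤ c) {x : ℝ} (hx : 0 < x) :
    Summable fun n : ℕ =>
      (c ^ (n + 1) / Real.Gamma (((n : ℝ) + 1) / 2)) * x ^ (((n : ℝ) + 1) / 2 - 1) := by
  have h : ∀ n : ℕ, (c ^ (n + 1) / Real.Gamma (((n : ℝ) + 1) / 2)) * x ^ (((n : ℝ) + 1) / 2 - 1)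
      = (c * x ^ (-(1:ℝ)/2)) * ((c * x ^ ((1:ℝ)/2)) ^ n / Real.Gamma (((n : ℝ) + 1) / 2)) := by
    intro n
    have hx' : x ^ (((n : ℝ) + 1) / 2 - 1) = x ^ (-(1:ℝ)/2) * (x ^ ((1:ℝ)/2)) ^ n := by
      rw [← Real.rpow_natCast (x ^ ((1:ℝ)/2)) n, ← Real.rpow_mul hx.le, ← Real.rpow_add hx]
      congr 1; ring
    rw [hx', mul_pow, pow_succ]
    ring
  rw [funext h]
  exact (summable_base (by positivity)).mul_left _

lemma summable_g {c : ℝ} (hc : 0 ≤ c) {x : ℝ} (hx : 0 < x) :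
    Summable fun n : ℕ =>
      (c ^ (n + 1) / Real.Gamma (((n : ℝ) + 1 + 1) / 2)) * x ^ (((n : ℝ) + 1 - 1) / 2) := by
  have hshift : Summable fun n : ℕ =>
      (c * x ^ ((1:ℝ)/2)) ^ (n + 1) / Real.Gamma ((((n + 1 : ℕ) : ℝ) + 1) / 2) :=
    ((summable_nat_add_iff 1).2 (summable_base (q := c * x ^ ((1:ℝ)/2)) (by positivity)))
  have h : ∀ n : ℕ, (c ^ (n + 1) / Real.Gamma (((n : ℝ) + 1 + 1) / 2)) * x ^ (((n : ℝ) + 1 - 1) / 2)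
      = x ^ (-(1:ℝ)/2) *
        ((c * x ^ ((1:ℝ)/2)) ^ (n + 1) / Real.Gamma ((((n + 1 : ℕ) : ℝ) + 1) / 2)) := by
    intro n
    have harg : (((n + 1 : ℕ) : ℝ) + 1) / 2 = ((n : ℝ) + 1 + 1) / 2 := by push_cast; ring
    have hx' : x ^ (((n : ℝ) + 1 - 1) / 2) = x ^ (-(1:ℝ)/2) * (x ^ ((1:ℝ)/2)) ^ (n + 1) := by
      rw [← Real.rpow_natCast (x ^ ((1:ℝ)/2)) (n + 1), ← Real.rpow_mul hx.le, ← Real.rpow_add hx]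
      congr 1; push_cast; ring
    rw [harg, hx', mul_pow]
    ring
  rw [funext h]
  exact hshift.mul_left _

lemma inner_eval (c μ t : ℝ) (hc : 0 ≤ c) {τ : ℝ} (hτ : 0 < τ) (hτt : τ < t) (n : ℕ) :
    ∫⁻ s in Set.Ioc τ t,
        ENNReal.ofReal ((c ^ (n + 1) / Real.Gamma (((n : ℝ) + 1) / 2)) *
            (t - s) ^ (((n : ℝ) + 1) / 2 - 1) *
          ((s - τ) ^ (-(1:ℝ)/2) * Real.exp (μ * τ)))
      = ENNReal.ofReal (Real.Gamma (1/2) *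
          ((c ^ (n + 1) / Real.Gamma (((n : ℝ) + 1 + 1) / 2)) *
            (t - τ) ^ (((n : ℝ) + 1 - 1) / 2)) * Real.exp (μ * τ)) := by
  have hα : (0:ℝ) < ((n : ℝ) + 1) / 2 := by positivity
  have hA : (0:ℝ) < t - τ := by linarith
  have hΓα : (0:ℝ) < Real.Gamma (((n : ℝ) + 1) / 2) := Real.Gamma_pos_of_pos hα
  have hΓβ : (0:ℝ) < Real.Gamma (((n : ℝ) + 1 + 1) / 2) := Real.Gamma_pos_of_pos (by positivity)
  set α : ℝ := ((n : ℝ) + 1) / 2 with hαdef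
  set aco : ℝ := c ^ (n + 1) / Real.Gamma α with hacodef
  set E : ℝ := Real.exp (μ * τ) with hEdef
  have hEpos : 0 < E := Real.exp_pos _
  have haco : 0 ≤ aco := by
    apply div_nonneg (pow_nonneg hc _) hΓα.le
  have h_fun : ∀ s : ℝ, aco * (t - s) ^ (α - 1) * ((s - τ) ^ (-(1:ℝ)/2) * E)
      = (aco * E) * ((s - τ) ^ ((1:ℝ)/2 - 1) * ((t - τ) - (s - τ)) ^ (α - 1)) := by
    intro s
    rw [show (t - τ) - (s - τ) = t - s by ring, show -(1:ℝ)/2 = (1:ℝ)/2 - 1 by norm_num]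
    ring
  have hbeta : IntervalIntegrable
      (fun x => x ^ ((1:ℝ)/2 - 1) * ((t - τ) - x) ^ (α - 1)) volume 0 (t - τ) :=
    intervalIntegrable_beta (by norm_num) hα hA
  have hshift := (hbeta.comp_sub_right τ).const_mul (aco * E)
  rw [zero_add, show t - τ + τ = t by ring] at hshift
  have hint : IntegrableOn
      (fun s => aco * (t - s) ^ (α - 1) * ((s - τ) ^ (-(1:ℝ)/2) * E)) (Set.Ioc τ t) := by
    have := hshift.1
    refine this.congr_fun ?_ measurableSet_Ioc
    intro s _
    exact (h_fun s).symm
  have hnn : 0 ≤ᵐ[volume.restrict (Set.Ioc τ t)]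
      fun s => aco * (t - s) ^ (α - 1) * ((s - τ) ^ (-(1:ℝ)/2) * E) := by
    filter_upwards [ae_restrict_mem measurableSet_Ioc] with s hs
    have h1 : (0:ℝ) ≤ t - s := by linarith [hs.2]
    have h2 : (0:ℝ) ≤ s - τ := by linarith [hs.1]
    have := Real.rpow_nonneg h1 (α - 1)
    have := Real.rpow_nonneg h2 (-(1:ℝ)/2)
    positivity
  rw [← ofReal_integral_eq_lintegral_ofReal hint hnn]
  congr 1
  have hIoc : ∫ s in Set.Ioc τ t, aco * (t - s) ^ (α - 1) * ((s - τ) ^ (-(1:ℝ)/2) * E)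
      = ∫ s in τ..t, aco * (t - s) ^ (α - 1) * ((s - τ) ^ (-(1:ℝ)/2) * E) :=
    (intervalIntegral.integral_of_le hτt.le).symm
  rw [hIoc]
  have hcongr : ∫ s in τ..t, aco * (t - s) ^ (α - 1) * ((s - τ) ^ (-(1:ℝ)/2) * E)
      = ∫ s in τ..t, (aco * E) *
          ((s - τ) ^ ((1:ℝ)/2 - 1) * ((t - τ) - (s - τ)) ^ (α - 1)) :=
    intervalIntegral.integral_congr fun s _ => h_fun s
  rw [hcongr, intervalIntegral.integral_const_mul]
  have hsub := intervalIntegral.integral_comp_sub_right (a := τ) (b := t)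
    (fun x => x ^ ((1:ℝ)/2 - 1) * ((t - τ) - x) ^ (α - 1)) τ
  rw [sub_self] at hsub
  rw [hsub, beta_real (by norm_num) hα hA]
  have hexp : (1:ℝ)/2 + α - 1 = ((n : ℝ) + 1 - 1) / 2 := by rw [hαdef]; ring
  have hβarg : (1:ℝ)/2 + α = ((n : ℝ) + 1 + 1) / 2 := by rw [hαdef]; ring
  rw [hexp, hβarg, hacodef]
  field_simp

lemma swap_triangle {t : ℝ} (f : ℝ → ℝ → ℝ≥0∞) (hf : Measurable (Function.uncurry f)) :
    ∫⁻ s in Set.Ioc 0 t, ∫⁻ τ in Set.Ioc 0 s, f s τ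
      = ∫⁻ τ in Set.Ioc 0 t, ∫⁻ s in Set.Ioc τ t, f s τ := by
  set D : Set (ℝ × ℝ) := {q | 0 < q.2 ∧ q.2 ≤ q.1} with hDdef
  have hD : MeasurableSet D :=
    (measurableSet_lt measurable_const measurable_snd).inter
      (measurableSet_le measurable_snd measurable_fst)
  have hmF : Measurable fun q : ℝ × ℝ => D.indicator (uncurry f) q := hf.indicator hD
  calc ∫⁻ s in Set.Ioc 0 t, ∫⁻ τ in Set.Ioc 0 s, f s τ
      = ∫⁻ s in Set.Ioc 0 t, ∫⁻ τ in Set.Ioc 0 t, D.indicator (uncurry f) (s, τ) := by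
        refine setLIntegral_congr_fun measurableSet_Ioc ?_
        intro s hs
        beta_reduce
        have heq : (fun τ => D.indicator (uncurry f) (s, τ))
            = (Set.Ioc 0 s).indicator (f s) := by
          funext τ
          by_cases h : τ ∈ Set.Ioc 0 s
          · rw [Set.indicator_of_mem h,
              Set.indicator_of_mem (by exact ⟨h.1, h.2⟩ : (s, τ) ∈ D)]
            rfl
          · rw [Set.indicator_of_notMem h, Set.indicator_of_notMem (by
              intro hmem
              exact h ⟨hmem.1, hmem.2⟩)]
        rw [heq, lintegral_indicator measurableSet_Ioc,
          Measure.restrict_restrict measurableSet_Ioc,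
          Set.inter_eq_left.2 (Set.Ioc_subset_Ioc_right hs.2)]
    _ = ∫⁻ τ in Set.Ioc 0 t, ∫⁻ s in Set.Ioc 0 t, D.indicator (uncurry f) (s, τ) := by
        refine lintegral_lintegral_swap ?_
        exact (by simpa using hmF : Measurable fun p : ℝ × ℝ =>
          D.indicator (uncurry f) (p.1, p.2)).aemeasurable
    _ = ∫⁻ τ in Set.Ioc 0 t, ∫⁻ s in Set.Ioc τ t, f s τ := by
        refine setLIntegral_congr_fun measurableSet_Ioc ?_
        intro τ hτ
        beta_reduce
        have heq : (fun s => D.indicator (uncurry f) (s, τ))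
            = (Set.Ici τ).indicator (fun s => f s τ) := by
          funext s
          by_cases h : s ∈ Set.Ici τ
          · rw [Set.indicator_of_mem h,
              Set.indicator_of_mem (by exact ⟨hτ.1, h⟩ : (s, τ) ∈ D)]
            rfl
          · rw [Set.indicator_of_notMem h, Set.indicator_of_notMem (by
              intro hmem
              exact h hmem.2)]
        rw [heq, lintegral_indicator measurableSet_Ici,
          Measure.restrict_restrict measurableSet_Ici]
        have hset : Set.Ici τ ∩ Set.Ioc 0 t = Set.Icc τ t := by
          ext s
          simp only [Set.mem_inter_iff, Set.mem_Ici, Set.mem_Ioc, Set.mem_Icc]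
          constructor
          · rintro ⟨h1, _, h3⟩; exact ⟨h1, h3⟩
          · rintro ⟨h1, h2⟩; exact ⟨h1, lt_of_lt_of_le hτ.1 h1, h2⟩
        rw [hset]
        exact setLIntegral_congr (Ioc_ae_eq_Icc.symm)


/-- Exchange-of-integration identity (Fubini plus the Beta-function evaluation
`∫_τ^t (t−s)^{n/2−1} (s−τ)^{−1/2} ds = (t−τ)^{(n+1)/2−1} Γ(n/2) Γ(1/2)/Γ((n+1)/2)`):
for `c ≥ 0`, `μ ∈ ℝ`, `t ≥ 0`,
`∫₀ᵗ (Σ_{n≥1} (cⁿ/Γ(n/2)) (t−s)^{n/2−1}) (∫₀ˢ (s−τ)^{−1/2} e^{μτ} dτ) ds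
  = Γ(1/2) ∫₀ᵗ (Σ_{n≥1} (cⁿ/Γ((n+1)/2)) (t−τ)^{(n−1)/2}) e^{μτ} dτ`. -/
theorem exchange_integration_identity
    (c μ t : ℝ) (hc : 0 ≤ c) (ht : 0 ≤ t) :
    (∫ s in (0:ℝ)..t,
        (∑' n : ℕ, (c ^ (n + 1) / Real.Gamma (((n : ℝ) + 1) / 2)) *
            (t - s) ^ (((n : ℝ) + 1) / 2 - 1)) *
          (∫ τ in (0:ℝ)..s, (s - τ) ^ (-(1:ℝ)/2) * Real.exp (μ * τ)))
      = Real.Gamma (1/2) *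
        ∫ τ in (0:ℝ)..t,
          (∑' n : ℕ, (c ^ (n + 1) / Real.Gamma (((n : ℝ) + 1 + 1) / 2)) *
              (t - τ) ^ (((n : ℝ) + 1 - 1) / 2)) *
            Real.exp (μ * τ) := by
  rcases ht.eq_or_lt with h0 | ht'
  · rw [← h0]; simp
  have hGhalf : 0 < Real.Gamma (1/2) := Real.Gamma_pos_of_pos (by norm_num)
  have hΓ1 : ∀ n : ℕ, 0 < Real.Gamma (((n : ℝ) + 1) / 2) :=
    fun n => Real.Gamma_pos_of_pos (by positivity)
  have hΓ2 : ∀ n : ℕ, 0 < Real.Gamma (((n : ℝ) + 1 + 1) / 2) :=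
    fun n => Real.Gamma_pos_of_pos (by positivity)
  -- real-valued term functions
  set f : ℕ → ℝ → ℝ := fun n s =>
    (c ^ (n + 1) / Real.Gamma (((n : ℝ) + 1) / 2)) * (t - s) ^ (((n : ℝ) + 1) / 2 - 1)
    with hfdef
  set g : ℕ → ℝ → ℝ := fun n τ =>
    (c ^ (n + 1) / Real.Gamma (((n : ℝ) + 1 + 1) / 2)) * (t - τ) ^ (((n : ℝ) + 1 - 1) / 2)
    with hgdef
  have hfnn : ∀ n : ℕ, ∀ s : ℝ, s ≤ t → 0 ≤ f n s := fun n s hs =>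
    mul_nonneg (div_nonneg (pow_nonneg hc _) (hΓ1 n).le)
      (Real.rpow_nonneg (by linarith) _)
  have hgnn : ∀ n : ℕ, ∀ τ : ℝ, τ ≤ t → 0 ≤ g n τ := fun n τ hτ =>
    mul_nonneg (div_nonneg (pow_nonneg hc _) (hΓ2 n).le)
      (Real.rpow_nonneg (by linarith) _)
  have hfm : ∀ n : ℕ, Measurable (f n) := by
    intro n; rw [hfdef]; fun_prop
  have hgm : ∀ n : ℕ, Measurable (g n) := by
    intro n; rw [hgdef]; fun_prop
  -- ENNReal kernels
  set κ : ℝ → ℝ → ℝ≥0∞ := fun s τ =>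
    ENNReal.ofReal ((s - τ) ^ (-(1:ℝ)/2)) * ENNReal.ofReal (Real.exp (μ * τ)) with hκdef
  have hκm : Measurable (uncurry κ) := by
    rw [hκdef]; unfold uncurry; fun_prop
  set D : Set (ℝ × ℝ) := {q | 0 < q.2 ∧ q.2 ≤ q.1} with hDdef
  have hD : MeasurableSet D :=
    (measurableSet_lt measurable_const measurable_snd).inter
      (measurableSet_le measurable_snd measurable_fst)
  set Gm : ℝ → ℝ≥0∞ := fun s => ∫⁻ τ in Set.Ioc 0 s, κ s τ with hGmdef
  have hGmeq : ∀ s : ℝ, Gm s = ∫⁻ τ, D.indicator (uncurry κ) (s, τ) := by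
    intro s
    have heq : (fun τ => D.indicator (uncurry κ) (s, τ))
        = (Set.Ioc 0 s).indicator (κ s) := by
      funext τ
      by_cases h : τ ∈ Set.Ioc 0 s
      · rw [Set.indicator_of_mem h,
          Set.indicator_of_mem (by exact ⟨h.1, h.2⟩ : (s, τ) ∈ D)]
        rfl
      · rw [Set.indicator_of_notMem h,
          Set.indicator_of_notMem (fun hmem => h ⟨hmem.1, hmem.2⟩)]
    rw [heq, lintegral_indicator measurableSet_Ioc]
  have hGm : Measurable Gm := by
    have : Measurable fun s => ∫⁻ τ, D.indicator (uncurry κ) (s, τ) :=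
      Measurable.lintegral_prod_right (hκm.indicator hD)
    exact (funext hGmeq : Gm = _) ▸ this
  -- the inner real integral in ENNReal form
  have hG : ∀ s : ℝ, 0 < s →
      ENNReal.ofReal (∫ τ in (0:ℝ)..s, (s - τ) ^ (-(1:ℝ)/2) * Real.exp (μ * τ)) = Gm s := by
    intro s hs
    rw [intervalIntegral.integral_of_le hs.le,
      ofReal_integral_eq_lintegral_ofReal ((intervalIntegrable_kernel μ s).1)
        (by
          filter_upwards [ae_restrict_mem measurableSet_Ioc] with τ hτ
          exact mul_nonneg (Real.rpow_nonneg (by linarith [hτ.2]) _) (Real.exp_pos _).le)]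
    refine setLIntegral_congr_fun measurableSet_Ioc ?_
    intro τ hτ
    beta_reduce
    rw [ENNReal.ofReal_mul (Real.rpow_nonneg (by linarith [hτ.2]) _)]
  have hGnn : ∀ s : ℝ, 0 < s →
      0 ≤ ∫ τ in (0:ℝ)..s, (s - τ) ^ (-(1:ℝ)/2) * Real.exp (μ * τ) := by
    intro s hs
    refine intervalIntegral.integral_nonneg hs.le fun τ hτ => ?_
    exact mul_nonneg (Real.rpow_nonneg (by linarith [hτ.2]) _) (Real.exp_pos _).le
  have hFnn : ∀ s ∈ Set.Ioo 0 t, (0:ℝ) ≤ ∑' n : ℕ, f n s :=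
    fun s hs => tsum_nonneg fun n => hfnn n s hs.2.le
  have hHnn : ∀ τ ∈ Set.Ioo 0 t, (0:ℝ) ≤ ∑' n : ℕ, g n τ :=
    fun τ hτ => tsum_nonneg fun n => hgnn n τ hτ.2.le
  have hfsum : ∀ s ∈ Set.Ioo 0 t, Summable fun n : ℕ => f n s := by
    intro s hs
    rw [hfdef]
    exact summable_f hc (by linarith [hs.2] : (0:ℝ) < t - s)
  have hgsum : ∀ τ ∈ Set.Ioo 0 t, Summable fun n : ℕ => g n τ := by
    intro τ hτ
    rw [hgdef]
    exact summable_g hc (by linarith [hτ.2] : (0:ℝ) < t - τ)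
  -- Step 1 : LHS as a lower Lebesgue integral
  have hL1 : (∫ s in (0:ℝ)..t,
        (∑' n : ℕ, f n s) * (∫ τ in (0:ℝ)..s, (s - τ) ^ (-(1:ℝ)/2) * Real.exp (μ * τ)))
      = (∫⁻ s in Set.Ioo 0 t, (∑' n : ℕ, ENNReal.ofReal (f n s)) * Gm s).toReal := by
    rw [intervalIntegral.integral_of_le ht, integral_Ioc_eq_integral_Ioo]
    rw [integral_eq_lintegral_of_nonneg_ae ?nn ?meas]
    case nn =>
      filter_upwards [ae_restrict_mem measurableSet_Ioo] with s hs
      exact mul_nonneg (hFnn s hs) (hGnn s hs.1)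
    case meas =>
      have hM : Measurable fun s =>
          (∑' n : ℕ, ENNReal.ofReal (f n s)).toReal * (Gm s).toReal :=
        ((Measurable.ennreal_tsum fun n => (hfm n).ennreal_ofReal).ennreal_toReal).mul
          hGm.ennreal_toReal
      refine hM.aestronglyMeasurable.congr ?_
      filter_upwards [ae_restrict_mem measurableSet_Ioo] with s hs
      rw [← ENNReal.ofReal_tsum_of_nonneg (fun n => hfnn n s hs.2.le) (hfsum s hs),
        ENNReal.toReal_ofReal (hFnn s hs), ← hG s hs.1,
        ENNReal.toReal_ofReal (hGnn s hs.1)]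
    congr 1
    refine setLIntegral_congr_fun measurableSet_Ioo ?_
    intro s hs
    beta_reduce
    rw [ENNReal.ofReal_mul (hFnn s hs), hG s hs.1,
      ENNReal.ofReal_tsum_of_nonneg (fun n => hfnn n s hs.2.le) (hfsum s hs)]
  -- Step 2 : exchange sum and integral, expose double integral
  have hL2 : ∫⁻ s in Set.Ioo 0 t, (∑' n : ℕ, ENNReal.ofReal (f n s)) * Gm s
      = ∑' n : ℕ, ∫⁻ s in Set.Ioc 0 t, ∫⁻ τ in Set.Ioc 0 s,
          ENNReal.ofReal (f n s) * κ s τ := by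
    calc ∫⁻ s in Set.Ioo 0 t, (∑' n : ℕ, ENNReal.ofReal (f n s)) * Gm s
        = ∫⁻ s in Set.Ioo 0 t, ∑' n : ℕ, ENNReal.ofReal (f n s) * Gm s :=
          lintegral_congr fun s => ENNReal.tsum_mul_right.symm
      _ = ∑' n : ℕ, ∫⁻ s in Set.Ioo 0 t, ENNReal.ofReal (f n s) * Gm s :=
          lintegral_tsum fun n => ((hfm n).ennreal_ofReal.mul hGm).aemeasurable
      _ = ∑' n : ℕ, ∫⁻ s in Set.Ioc 0 t, ENNReal.ofReal (f n s) * Gm s :=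
          tsum_congr fun n => setLIntegral_congr Ioo_ae_eq_Ioc
      _ = ∑' n : ℕ, ∫⁻ s in Set.Ioc 0 t, ∫⁻ τ in Set.Ioc 0 s,
            ENNReal.ofReal (f n s) * κ s τ :=
          tsum_congr fun n => lintegral_congr fun s =>
            (lintegral_const_mul' _ _ ENNReal.ofReal_ne_top).symm
  -- Step 3 : Fubini and the Beta evaluation, term by term
  have hL3 : ∀ n : ℕ, ∫⁻ s in Set.Ioc 0 t, ∫⁻ τ in Set.Ioc 0 s,
        ENNReal.ofReal (f n s) * κ s τ
      = ∫⁻ τ in Set.Ioo 0 t,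
          ENNReal.ofReal (Real.Gamma (1/2) * g n τ * Real.exp (μ * τ)) := by
    intro n
    have hswap := swap_triangle (t := t) (fun s τ => ENNReal.ofReal (f n s) * κ s τ)
      (by rw [hκdef, hfdef]; unfold uncurry; fun_prop)
    beta_reduce at hswap
    rw [hswap, ← setLIntegral_congr (Ioo_ae_eq_Ioc (a := (0:ℝ)) (b := t))]
    refine setLIntegral_congr_fun measurableSet_Ioo ?_
    intro τ hτ
    beta_reduce
    have h1 : ∫⁻ s in Set.Ioc τ t, ENNReal.ofReal (f n s) * κ s τ
        = ∫⁻ s in Set.Ioc τ t, ENNReal.ofReal (f n s *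
            ((s - τ) ^ (-(1:ℝ)/2) * Real.exp (μ * τ))) := by
      refine setLIntegral_congr_fun measurableSet_Ioc ?_
      intro s hs
      simp only [hκdef]
      rw [← ENNReal.ofReal_mul (Real.rpow_nonneg (by linarith [hs.1] : (0:ℝ) ≤ s - τ) _),
        ← ENNReal.ofReal_mul (hfnn n s hs.2)]
    rw [h1]
    simp only [hfdef, hgdef]
    exact inner_eval c μ t hc hτ.1 hτ.2 n
  -- Step 4 : identify the right-hand side
  have hR : Real.Gamma (1/2) * (∫ τ in (0:ℝ)..t, (∑' n : ℕ, g n τ) * Real.exp (μ * τ))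
      = (∑' n : ℕ, ∫⁻ τ in Set.Ioo 0 t,
          ENNReal.ofReal (Real.Gamma (1/2) * g n τ * Real.exp (μ * τ))).toReal := by
    have hlint : ∫⁻ τ in Set.Ioo 0 t, ENNReal.ofReal ((∑' n : ℕ, g n τ) * Real.exp (μ * τ))
        = ∑' n : ℕ, ∫⁻ τ in Set.Ioo 0 t, ENNReal.ofReal (g n τ * Real.exp (μ * τ)) := by
      rw [← lintegral_tsum fun n => (Measurable.ennreal_ofReal (f := fun τ => g n τ * Real.exp (μ * τ)) (by have := hgm n; fun_prop)).aemeasurable]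
      refine setLIntegral_congr_fun measurableSet_Ioo ?_
      intro τ hτ
      beta_reduce
      rw [ENNReal.ofReal_mul (hHnn τ hτ),
        ENNReal.ofReal_tsum_of_nonneg (fun n => hgnn n τ hτ.2.le) (hgsum τ hτ),
        ← ENNReal.tsum_mul_right]
      exact tsum_congr fun n => (ENNReal.ofReal_mul (hgnn n τ hτ.2.le)).symm
    have hfactor : ∑' n : ℕ, ∫⁻ τ in Set.Ioo 0 t,
          ENNReal.ofReal (Real.Gamma (1/2) * g n τ * Real.exp (μ * τ))
        = ENNReal.ofReal (Real.Gamma (1/2)) *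
            ∑' n : ℕ, ∫⁻ τ in Set.Ioo 0 t, ENNReal.ofReal (g n τ * Real.exp (μ * τ)) := by
      rw [← ENNReal.tsum_mul_left]
      refine tsum_congr fun n => ?_
      rw [← lintegral_const_mul' _ _ ENNReal.ofReal_ne_top]
      refine setLIntegral_congr_fun measurableSet_Ioo ?_
      intro τ hτ
      beta_reduce
      rw [mul_assoc, ENNReal.ofReal_mul hGhalf.le]
    rw [intervalIntegral.integral_of_le ht, integral_Ioc_eq_integral_Ioo,
      integral_eq_lintegral_of_nonneg_ae ?nn ?meas, hlint, hfactor,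
      ENNReal.toReal_mul, ENNReal.toReal_ofReal hGhalf.le]
    case nn =>
      filter_upwards [ae_restrict_mem measurableSet_Ioo] with τ hτ
      exact mul_nonneg (hHnn τ hτ) (Real.exp_pos _).le
    case meas =>
      have hM : Measurable fun τ =>
          (∑' n : ℕ, ENNReal.ofReal (g n τ)).toReal * Real.exp (μ * τ) :=
        ((Measurable.ennreal_tsum fun n => (hgm n).ennreal_ofReal).ennreal_toReal).mul
          (by fun_prop)
      refine hM.aestronglyMeasurable.congr ?_
      filter_upwards [ae_restrict_mem measurableSet_Ioo] with τ hτ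
      rw [← ENNReal.ofReal_tsum_of_nonneg (fun n => hgnn n τ hτ.2.le) (hgsum τ hτ),
        ENNReal.toReal_ofReal (hHnn τ hτ)]
  -- Put everything together
  calc (∫ s in (0:ℝ)..t,
        (∑' n : ℕ, (c ^ (n + 1) / Real.Gamma (((n : ℝ) + 1) / 2)) *
            (t - s) ^ (((n : ℝ) + 1) / 2 - 1)) *
          (∫ τ in (0:ℝ)..s, (s - τ) ^ (-(1:ℝ)/2) * Real.exp (μ * τ)))
      = (∑' n : ℕ, ∫⁻ τ in Set.Ioo 0 t,
          ENNReal.ofReal (Real.Gamma (1/2) * g n τ * Real.exp (μ * τ))).toReal := by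
        rw [hL1, hL2]
        exact congrArg ENNReal.toReal (tsum_congr hL3)
    _ = Real.Gamma (1/2) *
        ∫ τ in (0:ℝ)..t,
          (∑' n : ℕ, (c ^ (n + 1) / Real.Gamma (((n : ℝ) + 1 + 1) / 2)) *
              (t - τ) ^ (((n : ℝ) + 1 - 1) / 2)) *
            Real.exp (μ * τ) := hR.symm
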